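/- arXiv:2410.12131 — 4 statements merged into one kernel-verified Lean document; each statement's English description precedes it below -/
import Mathlib

section
/- Let γ : ℝ/ℤ → ℝ² be an injective, regular C¹ closed curve (i.e., its derivative is continuous and nowhere zero). Then γ is bi-Lipschitz from below: there exists M > 0 such that |γ(s) − γ(t)| ≥ M·d(s,t) for all s, t ∈ ℝ/ℤ, where d is the intrinsic distance on ℝ/ℤ. -/
-- local lower bound lemma
lemma loc_aux (γ : ℝ → ℂ) (hC1 : ContDiff ℝ 1 γ) {m ε : ℝ}
    (hub : ∀ u v : ℝ, |u - v| ≤ ε → ‖deriv γ u - deriv γ v‖ ≤ m / 2)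
    (hm : ∀ u : ℝ, m ≤ ‖deriv γ u‖) {s t : ℝ} (hst : |s - t| ≤ ε) :
    m / 2 * |s - t| ≤ ‖γ s - γ t‖ := by
  set g : ℝ → ℂ := fun u => γ u - u • deriv γ t with hg
  have hder : ∀ x : ℝ, HasDerivAt g (deriv γ x - deriv γ t) x := by
    intro x
    exact ((hC1.differentiable one_ne_zero x).hasDerivAt).sub
      (by simpa using (hasDerivAt_id x).smul_const (deriv γ t))
  have hconv : Convex ℝ (Set.Icc (min s t) (max s t)) := convex_Icc _ _
  have hmem_s : s ∈ Set.Icc (min s t) (max s t) := ⟨min_le_left _ _, le_max_left _ _⟩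
  have hmem_t : t ∈ Set.Icc (min s t) (max s t) := ⟨min_le_right _ _, le_max_right _ _⟩
  have hbound : ∀ x ∈ Set.Icc (min s t) (max s t), ‖deriv γ x - deriv γ t‖ ≤ m / 2 := by
    intro x hx
    apply hub
    have h1 : |x - t| ≤ max s t - min s t := by
      rw [abs_sub_le_iff]
      constructor <;> [linarith [hx.2, hmem_t.1]; linarith [hx.1, hmem_t.2]]
    have h2 : max s t - min s t = |s - t| := by rw [max_sub_min_eq_abs, abs_sub_comm]
    linarith
  have key : ‖g s - g t‖ ≤ m / 2 * ‖s - t‖ :=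
    hconv.norm_image_sub_le_of_norm_hasDerivWithin_le
      (fun x hx => (hder x).hasDerivWithinAt) hbound hmem_t hmem_s
  have hexp : γ s - γ t = (g s - g t) + (s - t) • deriv γ t := by
    simp [hg, sub_smul]; ring
  have h3 : ‖(s - t) • deriv γ t‖ = |s - t| * ‖deriv γ t‖ := by
    rw [norm_smul, Real.norm_eq_abs]
  have h4 : m * |s - t| ≤ ‖(s - t) • deriv γ t‖ := by
    rw [h3]
    rcases abs_nonneg (s - t) with h
    calc m * |s - t| ≤ ‖deriv γ t‖ * |s - t| := by
          apply mul_le_mul_of_nonneg_right (hm t) h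
      _ = |s - t| * ‖deriv γ t‖ := mul_comm _ _
  calc m / 2 * |s - t| = m * |s - t| - m / 2 * |s - t| := by ring
    _ ≤ ‖(s - t) • deriv γ t‖ - ‖g s - g t‖ := by
        have := key; rw [Real.norm_eq_abs] at this; linarith
    _ ≤ ‖γ s - γ t‖ := by
        rw [hexp]
        have h5 := norm_add_le (-(g s - g t)) ((g s - g t) + (s - t) • deriv γ t)
        simp only [neg_add_cancel_left, norm_neg] at h5
        linarith

lemma coe_fract_addCircle (s : ℝ) : ((Int.fract s : ℝ) : AddCircle (1:ℝ)) = (s : ℝ) := by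
  rw [Int.fract, QuotientAddGroup.mk_sub,
    show (((⌊s⌋:ℝ)) : AddCircle (1:ℝ)) = 0 by
      rw [QuotientAddGroup.eq_zero_iff]; exact AddSubgroup.intCast_mem_zmultiples_one _,
    sub_zero]

lemma dist_addCircle_eq (s t : ℝ) :
    dist (s : AddCircle (1:ℝ)) (t : ℝ) = |s - t - (round (s - t) : ℤ)| := by
  rw [dist_eq_norm, ← QuotientAddGroup.mk_sub, AddCircle.norm_eq]
  norm_num

lemma dist_addCircle_le_half (s t : ℝ) :
    dist (s : AddCircle (1:ℝ)) (t : ℝ) ≤ 1 / 2 := by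
  rw [dist_eq_norm]
  have := AddCircle.norm_le_half_period (p := (1:ℝ)) (x := (s:AddCircle (1:ℝ)) - ((t:ℝ):AddCircle (1:ℝ))) one_ne_zero
  simpa using this

/-- An injective, regular C¹ closed curve γ : ℝ/ℤ → ℝ² is bi-Lipschitz
from below w.r.t. the intrinsic distance on ℝ/ℤ. We model ℝ/ℤ-curves as 1-periodic
functions ℝ → ℂ, injectivity as injectivity modulo 1, and the intrinsic distance as
the quotient distance on `AddCircle (1 : ℝ)`. -/
theorem stmt_0 (γ : ℝ → ℂ) (hper : Function.Periodic γ 1)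
    (hC1 : ContDiff ℝ 1 γ) (hreg : ∀ t : ℝ, deriv γ t ≠ 0)
    (hinj : ∀ s t : ℝ, γ s = γ t → (s : AddCircle (1 : ℝ)) = (t : ℝ)) :
    ∃ M > (0 : ℝ), ∀ s t : ℝ,
      M * dist (s : AddCircle (1 : ℝ)) (t : ℝ) ≤ ‖γ s - γ t‖ := by
  have hc : Continuous γ := hC1.continuous
  have hdc : Continuous (deriv γ) := hC1.continuous_deriv le_rfl
  have hdper : Function.Periodic (deriv γ) 1 := by
    intro t
    have h : (fun x => γ (x + 1)) = γ := funext hper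
    calc deriv γ (t + 1) = deriv (fun x => γ (x + 1)) t := (deriv_comp_add_const γ 1 t).symm
      _ = deriv γ t := by rw [h]
  obtain ⟨t₀, _, hmin0⟩ := (isCompact_Icc (a := (0:ℝ)) (b := 1)).exists_isMinOn
    ⟨0, by norm_num⟩ hdc.norm.continuousOn
  have hmin := isMinOn_iff.mp hmin0
  set m := ‖deriv γ t₀‖ with hm
  have hmpos : 0 < m := norm_pos_iff.mpr (hreg t₀)
  have hfract : ∀ (f : ℝ → ℂ), Function.Periodic f 1 → ∀ t : ℝ, f (Int.fract t) = f t := by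
    intro f hf t
    have h := hf.sub_zsmul_eq (x := t) ⌊t⌋
    rw [zsmul_eq_mul, mul_one, Int.self_sub_floor] at h
    exact h
  have hmle : ∀ t : ℝ, m ≤ ‖deriv γ t‖ := by
    intro t
    have h2 : Int.fract t ∈ Set.Icc (0:ℝ) 1 := ⟨Int.fract_nonneg t, (Int.fract_lt_one t).le⟩
    calc m ≤ ‖deriv γ (Int.fract t)‖ := hmin _ h2
      _ = ‖deriv γ t‖ := by rw [hfract _ hdper]
  -- uniform continuity of the derivative
  have hUC : UniformContinuousOn (deriv γ) (Set.Icc (-1:ℝ) 2) :=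
    isCompact_Icc.uniformContinuousOn_of_continuous hdc.continuousOn
  rw [Metric.uniformContinuousOn_iff] at hUC
  obtain ⟨δ₀, hδ₀, hδ⟩ := hUC (m/2) (by linarith)
  set ε := min (δ₀/2) (1/2) with hε
  have hεpos : 0 < ε := lt_min (by linarith) (by norm_num)
  have hεhalf : ε ≤ 1/2 := min_le_right _ _
  have hub : ∀ u v : ℝ, |u - v| ≤ ε → ‖deriv γ u - deriv γ v‖ ≤ m / 2 := by
    intro u v huv
    set u' := Int.fract u with hu'def
    set v' := v - ⌊u⌋ with hv'def
    have hu' : deriv γ u' = deriv γ u := hfract _ hdper u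
    have hv' : deriv γ v' = deriv γ v := by
      have h := hdper.sub_zsmul_eq (x := v) ⌊u⌋
      rw [zsmul_eq_mul, mul_one] at h
      exact h
    have hfr0 : (0:ℝ) ≤ u' := Int.fract_nonneg u
    have hfr1 : u' < 1 := Int.fract_lt_one u
    have hdiff : |u' - v'| ≤ ε := by
      have h : u' - v' = u - v := by rw [hu'def, hv'def, Int.fract]; ring
      rw [h]; exact huv
    obtain ⟨ha, hb⟩ := abs_le.mp hdiff
    have hu'mem : u' ∈ Set.Icc (-1:ℝ) 2 := ⟨by linarith, by linarith⟩
    have hv'mem : v' ∈ Set.Icc (-1:ℝ) 2 := ⟨by linarith, by linarith⟩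
    have hlt : dist u' v' < δ₀ := by
      rw [Real.dist_eq]
      have : ε ≤ δ₀ / 2 := min_le_left _ _
      linarith [hdiff]
    have := hδ u' hu'mem v' hv'mem hlt
    rw [dist_eq_norm] at this
    rw [← hu', ← hv']
    linarith
  -- far-case compact minimum
  set K : Set (ℝ × ℝ) := {p : ℝ × ℝ | p.1 ∈ Set.Icc (0:ℝ) 1 ∧ p.2 ∈ Set.Icc (0:ℝ) 1 ∧
      ε ≤ dist (p.1 : AddCircle (1:ℝ)) (p.2 : ℝ)} with hK
  have hcoe : Continuous fun x : ℝ => (x : AddCircle (1:ℝ)) := continuous_quotient_mk'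
  have hKcl : IsClosed K := by
    have h1 : IsClosed {p : ℝ × ℝ | p.1 ∈ Set.Icc (0:ℝ) 1} := isClosed_Icc.preimage continuous_fst
    have h2 : IsClosed {p : ℝ × ℝ | p.2 ∈ Set.Icc (0:ℝ) 1} := isClosed_Icc.preimage continuous_snd
    have h3 : IsClosed {p : ℝ × ℝ | ε ≤ dist (p.1 : AddCircle (1:ℝ)) (p.2 : ℝ)} :=
      isClosed_le continuous_const ((hcoe.comp continuous_fst).dist (hcoe.comp continuous_snd))
    exact h1.inter (h2.inter h3)
  have hKcpt : IsCompact K := (isCompact_Icc.prod isCompact_Icc).of_isClosed_subset hKcl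
    (fun p hp => Set.mem_prod.mpr ⟨hp.1, hp.2.1⟩)
  have hKne : K.Nonempty := by
    refine ⟨(1/2, 0), ⟨by norm_num, by norm_num⟩, ⟨by norm_num, by norm_num⟩, ?_⟩
    rw [dist_addCircle_eq]
    have : round ((1:ℝ)/2 - 0) = 1 := by norm_num [round_eq]
    rw [this]
    push_cast
    rw [show (1:ℝ)/2 - 0 - 1 = -(1/2) by ring, abs_neg, abs_of_nonneg (by norm_num : (0:ℝ) ≤ 1/2)]
    exact hεhalf
  obtain ⟨p₀, hp₀K, hpmin0⟩ := hKcpt.exists_isMinOn hKne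
    (((hc.comp continuous_fst).sub (hc.comp continuous_snd)).norm.continuousOn)
  have hpmin := isMinOn_iff.mp hpmin0
  set δ := ‖γ p₀.1 - γ p₀.2‖ with hδdef
  have hδpos : 0 < δ := by
    rcases (norm_nonneg (γ p₀.1 - γ p₀.2)).lt_or_eq with h | h
    · exact h
    · exfalso
      have hz : γ p₀.1 = γ p₀.2 := by
        have := h.symm
        rw [norm_eq_zero, sub_eq_zero] at this
        exact this
      have := hinj _ _ hz
      have hdz : dist (p₀.1 : AddCircle (1:ℝ)) (p₀.2 : ℝ) = 0 := by
        rw [this, dist_self]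
      have := hp₀K.2.2
      rw [hdz] at this
      linarith
  refine ⟨min (m/2) (2*δ), lt_min (by linarith) (by linarith), ?_⟩
  intro s t
  set d := dist (s : AddCircle (1:ℝ)) (t : ℝ) with hd
  have hd0 : (0:ℝ) ≤ d := dist_nonneg
  by_cases hcase : d < ε
  · -- near case
    set t₁ : ℝ := t + (round (s - t) : ℤ) with ht₁
    have hdeq : d = |s - t₁| := by
      rw [hd, dist_addCircle_eq]
      congr 1
      rw [ht₁]; ring
    have hγt₁ : γ t₁ = γ t := by
      have h := hper.zsmul (round (s - t)) t
      rw [zsmul_eq_mul, mul_one] at h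
      rw [ht₁]
      exact h
    have hloc := loc_aux γ hC1 hub hmle (s := s) (t := t₁)
      (by rw [← hdeq]; linarith)
    rw [hγt₁] at hloc
    calc min (m/2) (2*δ) * d ≤ m/2 * d := by
          apply mul_le_mul_of_nonneg_right (min_le_left _ _) hd0
      _ = m/2 * |s - t₁| := by rw [hdeq]
      _ ≤ ‖γ s - γ t‖ := hloc
  · -- far case
    push_neg at hcase
    have hmemK : (Int.fract s, Int.fract t) ∈ K := by
      refine ⟨⟨Int.fract_nonneg s, (Int.fract_lt_one s).le⟩,
        ⟨Int.fract_nonneg t, (Int.fract_lt_one t).le⟩, ?_⟩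
      show ε ≤ dist ((Int.fract s : ℝ) : AddCircle (1:ℝ)) ((Int.fract t : ℝ))
      rw [coe_fract_addCircle, coe_fract_addCircle]
      exact hcase
    have hδle : δ ≤ ‖γ s - γ t‖ := by
      have h := hpmin _ hmemK
      simpa [hfract γ hper] using h
    have hdhalf : d ≤ 1/2 := dist_addCircle_le_half s t
    calc min (m/2) (2*δ) * d ≤ 2*δ * d := by
          apply mul_le_mul_of_nonneg_right (min_le_right _ _) hd0
      _ ≤ 2*δ * (1/2) := by nlinarith
      _ = δ := by ring
      _ ≤ ‖γ s - γ t‖ := hδle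
end

section
/- Let s ∈ (0,1), p ∈ (1,∞) with sp > 1. Let γ : ℝ/ℤ → ℝ² be a C¹ closed curve with constant speed, and suppose there exist t₁ ≠ t₂ with γ(t₁) = γ(t₂) and γ'(t₁) ≠ γ'(t₂). Then the energy ∬_{(ℝ/ℤ)²} |γ'(t) − γ'(t')|^p / |γ(t) − γ(t')|^{1+sp} dt dt' = +∞. -/
open MeasureTheory Set

/-- for s ∈ (0,1), p ∈ (1,∞) with sp > 1, a C¹ constant-speed closed curve
with a transversal self-intersection (γ(t₁) = γ(t₂), γ'(t₁) ≠ γ'(t₂)) has infinite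
tangent-oscillation energy. -/
theorem stmt_6 (s p : ℝ) (hs : s ∈ Ioo (0:ℝ) 1) (hp : 1 < p) (hsp : 1 < s * p)
    (γ : ℝ → ℂ) (hper : Function.Periodic γ 1) (hC1 : ContDiff ℝ 1 γ)
    (c : ℝ) (hc : 0 < c) (hspeed : ∀ t : ℝ, ‖deriv γ t‖ = c)
    (t₁ t₂ : ℝ) (hne : t₁ ≠ t₂) (heq : γ t₁ = γ t₂) (hder : deriv γ t₁ ≠ deriv γ t₂) :
    (∫⁻ t in Icc (0:ℝ) 1, ∫⁻ t' in Icc (0:ℝ) 1,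
        ENNReal.ofReal (‖deriv γ t - deriv γ t'‖ ^ p / ‖γ t - γ t'‖ ^ (1 + s * p))) = ⊤ := by
  obtain ⟨hs0, hs1⟩ := hs
  have hp0 : (0:ℝ) < p := lt_trans one_pos hp
  have hsp0 : (0:ℝ) < s * p := lt_trans one_pos hsp
  have hexp0 : (0:ℝ) < 1 + s * p := by linarith
  have hdiff : Differentiable ℝ γ := hC1.differentiable one_ne_zero
  have hdc : Continuous (deriv γ) := hC1.continuous_deriv le_rfl
  have hperd : Function.Periodic (deriv γ) 1 := by
    intro x
    have h1 : (fun y => γ (y + 1)) = γ := funext fun y => hper y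
    rw [← deriv_comp_add_const γ 1 x, h1]
  set τ₁ := Int.fract t₁ with hτ₁def
  set τ₂ := Int.fract t₂ with hτ₂def
  have hγf : ∀ t : ℝ, γ (Int.fract t) = γ t := by
    intro t
    rw [← Int.self_sub_floor]
    simpa using hper.sub_int_mul_eq (x := t) ⌊t⌋
  have hdf : ∀ t : ℝ, deriv γ (Int.fract t) = deriv γ t := by
    intro t
    rw [← Int.self_sub_floor]
    simpa using hperd.sub_int_mul_eq (x := t) ⌊t⌋
  set v := deriv γ τ₁ with hvdef
  set w := deriv γ τ₂ with hwdef
  have hvw : v ≠ w := by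
    rw [hvdef, hwdef, hτ₁def, hτ₂def, hdf t₁, hdf t₂]
    exact hder
  set ε := ‖v - w‖ with hεdef
  have hε : 0 < ε := by
    rw [hεdef]
    exact norm_sub_pos_iff.mpr hvw
  have hvc : ‖v‖ = c := hspeed τ₁
  have hwc : ‖w‖ = c := hspeed τ₂
  have hγτ : γ τ₁ = γ τ₂ := by
    rw [hτ₁def, hτ₂def, hγf t₁, hγf t₂]; exact heq
  have hτ₁0 : 0 ≤ τ₁ := Int.fract_nonneg t₁
  have hτ₁1 : τ₁ < 1 := Int.fract_lt_one t₁
  have hτ₂0 : 0 ≤ τ₂ := Int.fract_nonneg t₂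
  have hτ₂1 : τ₂ < 1 := Int.fract_lt_one t₂
  -- the linear functional φ z = Re (z * conj v)
  set φ : ℂ → ℝ := fun z => (z * (starRingEnd ℂ) v).re with hφdef
  have hφ_le : ∀ z, |φ z| ≤ ‖z‖ * c := by
    intro z
    calc |φ z| ≤ ‖z * (starRingEnd ℂ) v‖ := Complex.abs_re_le_norm _
      _ = ‖z‖ * ‖v‖ := by rw [norm_mul, Complex.norm_conj]
      _ = ‖z‖ * c := by rw [hvc]
  have hφ_sub : ∀ z₁ z₂, φ (z₁ - z₂) = φ z₁ - φ z₂ := fun z₁ z₂ => by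
    simp only [hφdef, sub_mul, Complex.sub_re]
  have hφ_add : ∀ z₁ z₂, φ (z₁ + z₂) = φ z₁ + φ z₂ := fun z₁ z₂ => by
    simp only [hφdef, add_mul, Complex.add_re]
  have hφ_smul : ∀ (r : ℝ) (z : ℂ), φ (r • z) = r * φ z := fun r z => by
    simp only [hφdef, Complex.mul_re, Complex.smul_re, Complex.smul_im, Complex.conj_re,
      Complex.conj_im, smul_eq_mul]
    ring
  have hnormsq : ∀ z : ℂ, Complex.normSq z = ‖z‖ ^ 2 := by
    intro z
    rw [Complex.normSq_eq_norm_sq]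
  have hφv : φ v = c ^ 2 := by
    rw [hφdef]
    simp only [Complex.mul_conj]
    rw [Complex.ofReal_re, hnormsq, hvc]
  have hφw : φ w = c ^ 2 - ε ^ 2 / 2 := by
    have h1 : ε ^ 2 = Complex.normSq (v - w) := by rw [hεdef, ← hnormsq]
    have h2 : Complex.normSq (v - w) = Complex.normSq v + Complex.normSq w - 2 * φ w := by
      simp only [Complex.normSq_apply, hφdef, Complex.mul_re, Complex.conj_re, Complex.conj_im,
        Complex.sub_re, Complex.sub_im]
      ring
    have h3 : Complex.normSq v = c ^ 2 := by rw [hnormsq, hvc]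
    have h4 : Complex.normSq w = c ^ 2 := by rw [hnormsq, hwc]
    rw [h3, h4] at h2
    rw [h2] at h1
    linarith
  set m : ℝ := min (c ^ 2) (ε ^ 2 / 2) with hmdef
  have hm : 0 < m := lt_min (by positivity) (by positivity)
  set μ0 : ℝ := min (ε / 4) (m / (4 * c)) with hμdef
  have hμpos : 0 < μ0 := lt_min (by positivity) (by positivity)
  have hμε : μ0 ≤ ε / 4 := min_le_left _ _
  have hμm : μ0 ≤ m / (4 * c) := min_le_right _ _
  -- continuity radii
  obtain ⟨δ₁, hδ₁pos, hδ₁⟩ : ∃ δ > 0, ∀ x, |x - τ₁| < δ → ‖deriv γ x - v‖ < μ0 := by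
    obtain ⟨δ, hδpos, hδ⟩ := Metric.continuous_iff.mp hdc τ₁ μ0 hμpos
    exact ⟨δ, hδpos, fun x hx => by
      simpa [dist_eq_norm, hvdef] using hδ x (by simpa [Real.dist_eq] using hx)⟩
  obtain ⟨δ₂, hδ₂pos, hδ₂⟩ : ∃ δ > 0, ∀ x, |x - τ₂| < δ → ‖deriv γ x - w‖ < μ0 := by
    obtain ⟨δ, hδpos, hδ⟩ := Metric.continuous_iff.mp hdc τ₂ μ0 hμpos
    exact ⟨δ, hδpos, fun x hx => by
      simpa [dist_eq_norm, hwdef] using hδ x (by simpa [Real.dist_eq] using hx)⟩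
  -- Taylor-type bound
  have taylor : ∀ (τ δ : ℝ) (z : ℂ), 0 < δ → (∀ y, |y - τ| < δ → ‖deriv γ y - z‖ < μ0) →
      ∀ x, |x - τ| < δ → ‖γ x - γ τ - (x - τ) • z‖ ≤ μ0 * |x - τ| := by
    intro τ δ z hδ hcl x hx
    have hconv : Convex ℝ (Metric.ball τ δ) := convex_ball τ δ
    have hfd : ∀ y ∈ Metric.ball τ δ, HasDerivWithinAt (fun y => γ y - (y - τ) • z)
        (deriv γ y - z) (Metric.ball τ δ) y := by
      intro y _
      have h2 : HasDerivAt (fun y : ℝ => (y - τ) • z) z y := by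
        simpa using ((hasDerivAt_id y).sub_const τ).smul_const z
      exact ((hdiff y).hasDerivAt.sub h2).hasDerivWithinAt
    have hb : ∀ y ∈ Metric.ball τ δ, ‖deriv γ y - z‖ ≤ μ0 := fun y hy =>
      (hcl y (by simpa [Real.dist_eq] using hy)).le
    have hxb : x ∈ Metric.ball τ δ := by simpa [Real.dist_eq] using hx
    have hτb : τ ∈ Metric.ball τ δ := Metric.mem_ball_self hδ
    have h := Convex.norm_image_sub_le_of_norm_hasDerivWithin_le hfd hb hconv hτb hxb
    simp only [sub_self, zero_smul, sub_zero, Real.norm_eq_abs] at h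
    calc ‖γ x - γ τ - (x - τ) • z‖ = ‖γ x - (x - τ) • z - γ τ‖ := by rw [sub_right_comm]
      _ ≤ μ0 * |x - τ| := h
  -- global Lipschitz bound
  have hlip : ∀ x y : ℝ, ‖γ x - γ y‖ ≤ c * |x - y| := by
    intro x y
    have h := Convex.norm_image_sub_le_of_norm_deriv_le (s := (univ : Set ℝ))
      (fun z _ => hdiff z) (fun z _ => (hspeed z).le) convex_univ (mem_univ y) (mem_univ x)
    simpa [Real.norm_eq_abs] using h
  -- the size of the box
  set a : ℝ := min (min δ₁ δ₂) (min (1 - τ₁) (1 - τ₂)) with hadef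
  have ha : 0 < a := lt_min (lt_min hδ₁pos hδ₂pos) (lt_min (by linarith) (by linarith))
  have haδ₁ : a ≤ δ₁ := le_trans (min_le_left _ _) (min_le_left _ _)
  have haδ₂ : a ≤ δ₂ := le_trans (min_le_left _ _) (min_le_right _ _)
  have haτ₁ : τ₁ + a ≤ 1 := by
    have h := le_trans (min_le_right (min δ₁ δ₂) _) (min_le_left (1 - τ₁) (1 - τ₂))
    linarith
  have haτ₂ : τ₂ + a ≤ 1 := by
    have h := le_trans (min_le_right (min δ₁ δ₂) _) (min_le_right (1 - τ₁) (1 - τ₂))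
    linarith
  -- key pointwise estimates
  have key : ∀ t ∈ Ioo τ₁ (τ₁ + a), ∀ t' ∈ Ioo τ₂ (τ₂ + (t - τ₁)),
      ε / 2 ≤ ‖deriv γ t - deriv γ t'‖ ∧ γ t ≠ γ t' ∧
      ‖γ t - γ t'‖ ≤ 2 * c * (t - τ₁) := by
    rintro t ⟨ht1, ht2⟩ t' ⟨ht'1, ht'2⟩
    have hu : 0 < t - τ₁ := by linarith
    have hua : t - τ₁ < a := by linarith
    have hu' : 0 < t' - τ₂ := by linarith
    have hu'u : t' - τ₂ < t - τ₁ := by linarith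
    have htδ₁ : |t - τ₁| < δ₁ := by rw [abs_of_pos hu]; linarith
    have ht'δ₂ : |t' - τ₂| < δ₂ := by rw [abs_of_pos hu']; linarith
    have hdt : ‖deriv γ t - v‖ < μ0 := hδ₁ t htδ₁
    have hdt' : ‖deriv γ t' - w‖ < μ0 := hδ₂ t' ht'δ₂
    refine ⟨?_, ?_, ?_⟩
    · -- tangent separation
      have heq1 : v - w = (v - deriv γ t) + (deriv γ t - deriv γ t') + (deriv γ t' - w) := by
        abel
      have htri : ε ≤ ‖v - deriv γ t‖ + ‖deriv γ t - deriv γ t'‖ + ‖deriv γ t' - w‖ := by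
        calc ε = ‖(v - deriv γ t) + (deriv γ t - deriv γ t') + (deriv γ t' - w)‖ := by
              rw [hεdef, ← heq1]
          _ ≤ _ := norm_add₃_le
      have h1 : ‖v - deriv γ t‖ < μ0 := by rw [norm_sub_rev]; exact hdt
      linarith
    · -- points are separated
      set A := γ t - γ τ₁ - (t - τ₁) • v with hAdef
      set B := γ t' - γ τ₂ - (t' - τ₂) • w with hBdef
      have hA : ‖A‖ ≤ μ0 * (t - τ₁) := by
        have h := taylor τ₁ δ₁ v hδ₁pos hδ₁ t htδ₁
        rwa [abs_of_pos hu] at h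
      have hB : ‖B‖ ≤ μ0 * (t - τ₁) := by
        have h := taylor τ₂ δ₂ w hδ₂pos hδ₂ t' ht'δ₂
        rw [abs_of_pos hu'] at h
        have h2 : μ0 * (t' - τ₂) ≤ μ0 * (t - τ₁) := by
          exact mul_le_mul_of_nonneg_left hu'u.le hμpos.le
        linarith
      have hdecomp : γ t - γ t' = (t - τ₁) • v - (t' - τ₂) • w + (A - B) := by
        rw [hAdef, hBdef, hγτ]; abel
      have hφval : φ (γ t - γ t') =
          (t - τ₁) * c ^ 2 - (t' - τ₂) * φ w + (φ A - φ B) := by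
        rw [hdecomp, hφ_add, hφ_sub, hφ_sub, hφ_smul, hφ_smul, hφv]
      have hφA : -(μ0 * (t - τ₁) * c) ≤ φ A := by
        have h1 := (abs_le.mp (hφ_le A)).1
        have h2 : ‖A‖ * c ≤ μ0 * (t - τ₁) * c := mul_le_mul_of_nonneg_right hA hc.le
        linarith
      have hφB : φ B ≤ μ0 * (t - τ₁) * c := by
        have h1 := (abs_le.mp (hφ_le B)).2
        have h2 : ‖B‖ * c ≤ μ0 * (t - τ₁) * c := mul_le_mul_of_nonneg_right hB hc.le
        linarith
      have hmain : (t - τ₁) * m ≤ (t - τ₁) * c ^ 2 - (t' - τ₂) * φ w := by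
        have h1 : (t - τ₁) * c ^ 2 - (t' - τ₂) * φ w =
            (t - τ₁ - (t' - τ₂)) * c ^ 2 + (t' - τ₂) * (ε ^ 2 / 2) := by
          rw [hφw]; ring
        have h2 : (t - τ₁ - (t' - τ₂)) * m ≤ (t - τ₁ - (t' - τ₂)) * c ^ 2 :=
          mul_le_mul_of_nonneg_left (min_le_left _ _) (by linarith)
        have h3 : (t' - τ₂) * m ≤ (t' - τ₂) * (ε ^ 2 / 2) :=
          mul_le_mul_of_nonneg_left (min_le_right _ _) hu'.le
        have h4 : (t - τ₁) * m = (t - τ₁ - (t' - τ₂)) * m + (t' - τ₂) * m := by ring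
        linarith
      have e1 : μ0 * c ≤ m / 4 := by
        have h1 : μ0 * (4 * c) ≤ (m / (4 * c)) * (4 * c) :=
          mul_le_mul_of_nonneg_right hμm (by linarith)
        have h2 : (m / (4 * c)) * (4 * c) = m := by field_simp
        have h3 : μ0 * (4 * c) = 4 * (μ0 * c) := by ring
        linarith
      have e2 : μ0 * (t - τ₁) * c ≤ (t - τ₁) * (m / 4) := by
        calc μ0 * (t - τ₁) * c = (t - τ₁) * (μ0 * c) := by ring
          _ ≤ (t - τ₁) * (m / 4) := mul_le_mul_of_nonneg_left e1 hu.le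
      have e3 : (t - τ₁) * (m / 4) = ((t - τ₁) * m) / 4 := by ring
      have e4 : 0 < (t - τ₁) * m := mul_pos hu hm
      have hφpos : 0 < φ (γ t - γ t') := by
        rw [hφval]
        linarith
      intro hcontra
      rw [hcontra, sub_self] at hφpos
      simp [hφdef] at hφpos
    · -- upper bound
      have h1 : γ t - γ t' = (γ t - γ τ₁) + (γ τ₂ - γ t') := by rw [hγτ]; abel
      have h2 : c * |τ₂ - t'| = c * (t' - τ₂) := by
        rw [abs_sub_comm, abs_of_pos hu']
      have h3 : c * (t' - τ₂) ≤ c * (t - τ₁) := mul_le_mul_of_nonneg_left hu'u.le hc.le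
      calc ‖γ t - γ t'‖ ≤ ‖γ t - γ τ₁‖ + ‖γ τ₂ - γ t'‖ := by rw [h1]; exact norm_add_le _ _
        _ ≤ c * |t - τ₁| + c * |τ₂ - t'| := add_le_add (hlip t τ₁) (hlip τ₂ t')
        _ ≤ 2 * c * (t - τ₁) := by rw [abs_of_pos hu, h2]; linarith
  -- constant
  set K : ℝ := (ε / 2) ^ p / (2 * c) ^ (1 + s * p) with hKdef
  have hK : 0 < K :=
    div_pos (Real.rpow_pos_of_pos (by linarith) _) (Real.rpow_pos_of_pos (by linarith) _)
  -- pointwise lower bound for the integrand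
  have hpt : ∀ t ∈ Ioo τ₁ (τ₁ + a), ∀ t' ∈ Ioo τ₂ (τ₂ + (t - τ₁)),
      K * (t - τ₁) ^ (-(1 + s * p)) ≤
        ‖deriv γ t - deriv γ t'‖ ^ p / ‖γ t - γ t'‖ ^ (1 + s * p) := by
    intro t ht t' ht'
    obtain ⟨h1, h2, h3⟩ := key t ht t' ht'
    have hu : 0 < t - τ₁ := by linarith [ht.1]
    have hnum : (ε / 2) ^ p ≤ ‖deriv γ t - deriv γ t'‖ ^ p :=
      Real.rpow_le_rpow (by linarith) h1 hp0.le
    have hden_pos : 0 < ‖γ t - γ t'‖ ^ (1 + s * p) :=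
      Real.rpow_pos_of_pos (norm_pos_iff.mpr (sub_ne_zero.mpr h2)) _
    have hden_le : ‖γ t - γ t'‖ ^ (1 + s * p) ≤ (2 * c * (t - τ₁)) ^ (1 + s * p) :=
      Real.rpow_le_rpow (norm_nonneg _) h3 hexp0.le
    have heqK : K * (t - τ₁) ^ (-(1 + s * p)) =
        (ε / 2) ^ p / (2 * c * (t - τ₁)) ^ (1 + s * p) := by
      rw [Real.mul_rpow (by linarith : (0:ℝ) ≤ 2 * c) hu.le, Real.rpow_neg hu.le,
        ← div_div, hKdef, div_eq_mul_inv ((ε / 2) ^ p / (2 * c) ^ (1 + s * p))]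
    rw [heqK]
    exact div_le_div₀ (Real.rpow_nonneg (norm_nonneg _) _) hnum hden_pos hden_le
  -- inner integral bound
  have hinner : ∀ t ∈ Ioo τ₁ (τ₁ + a),
      ENNReal.ofReal (K * (t - τ₁) ^ (-(s * p))) ≤
        ∫⁻ t' in Icc (0:ℝ) 1,
          ENNReal.ofReal (‖deriv γ t - deriv γ t'‖ ^ p / ‖γ t - γ t'‖ ^ (1 + s * p)) := by
    intro t ht
    have hu : 0 < t - τ₁ := by linarith [ht.1]
    have hua : t - τ₁ < a := by linarith [ht.2]
    have hupow : (t - τ₁) ^ (-(1 + s * p)) * (t - τ₁) = (t - τ₁) ^ (-(s * p)) := by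
      nth_rewrite 2 [← Real.rpow_one (t - τ₁)]
      rw [← Real.rpow_add hu]
      congr 1
      ring
    have hsub : Ioo τ₂ (τ₂ + (t - τ₁)) ⊆ Icc (0:ℝ) 1 := by
      intro x hx
      exact ⟨by linarith [hx.1], by linarith [hx.2]⟩
    calc ENNReal.ofReal (K * (t - τ₁) ^ (-(s * p)))
        = ENNReal.ofReal (K * (t - τ₁) ^ (-(1 + s * p))) * ENNReal.ofReal (t - τ₁) := by
          rw [← ENNReal.ofReal_mul (mul_nonneg hK.le (Real.rpow_nonneg hu.le _))]
          congr 1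
          rw [mul_assoc, hupow]
      _ = ENNReal.ofReal (K * (t - τ₁) ^ (-(1 + s * p))) * volume (Ioo τ₂ (τ₂ + (t - τ₁))) := by
          rw [Real.volume_Ioo]
          congr 1
          rw [add_sub_cancel_left]
      _ = ∫⁻ _ in Ioo τ₂ (τ₂ + (t - τ₁)),
            ENNReal.ofReal (K * (t - τ₁) ^ (-(1 + s * p))) := by
          rw [setLIntegral_const]
      _ ≤ ∫⁻ t' in Ioo τ₂ (τ₂ + (t - τ₁)),
            ENNReal.ofReal (‖deriv γ t - deriv γ t'‖ ^ p / ‖γ t - γ t'‖ ^ (1 + s * p)) := by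
          apply setLIntegral_mono' measurableSet_Ioo
          intro x hx
          exact ENNReal.ofReal_le_ofReal (hpt t ht x hx)
      _ ≤ _ := lintegral_mono_set hsub
  -- the diverging model integral
  have houter : (∫⁻ x in Ioo (0:ℝ) a, ENNReal.ofReal (K * x ^ (-(s * p)))) = ⊤ := by
    by_contra hfin
    have hcont : ContinuousOn (fun x : ℝ => K * x ^ (-(s * p))) (Ioo 0 a) := by
      intro x hx
      exact (continuousAt_const.mul
        (Real.continuousAt_rpow_const x _ (Or.inl (ne_of_gt hx.1)))).continuousWithinAt
    have hfin' : (∫⁻ x in Ioo (0:ℝ) a, (‖K * x ^ (-(s * p))‖₊ : ENNReal)) < ⊤ := by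
      have hcongr : (∫⁻ x in Ioo (0:ℝ) a, (‖K * x ^ (-(s * p))‖₊ : ENNReal)) =
          ∫⁻ x in Ioo (0:ℝ) a, ENNReal.ofReal (K * x ^ (-(s * p))) := by
        apply setLIntegral_congr_fun measurableSet_Ioo
        intro x hx
        exact Real.enorm_eq_ofReal (mul_nonneg hK.le (Real.rpow_nonneg hx.1.le _))
      rw [hcongr]
      exact lt_top_iff_ne_top.mpr hfin
    have hint : IntegrableOn (fun x : ℝ => K * x ^ (-(s * p))) (Ioo 0 a) :=
      ⟨hcont.aestronglyMeasurable measurableSet_Ioo, hfin'⟩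
    have hint2 : IntegrableOn (fun x : ℝ => x ^ (-(s * p))) (Ioo 0 a) := by
      have h : IntegrableOn (fun x : ℝ => K⁻¹ * (K * x ^ (-(s * p)))) (Ioo 0 a) :=
        hint.const_mul K⁻¹
      exact h.congr_fun (fun x _ => by field_simp) measurableSet_Ioo
    rw [intervalIntegral.integrableOn_Ioo_rpow_iff ha] at hint2
    linarith
  -- substitution
  have hshift : (∫⁻ t in Ioo τ₁ (τ₁ + a), ENNReal.ofReal (K * (t - τ₁) ^ (-(s * p)))) = ⊤ := by
    have hmp : MeasurePreserving (fun x : ℝ => x + τ₁) volume volume :=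
      measurePreserving_add_right volume τ₁
    have hemb : MeasurableEmbedding (fun x : ℝ => x + τ₁) :=
      (Homeomorph.addRight τ₁).measurableEmbedding
    have hpre : (fun x : ℝ => x + τ₁) ⁻¹' Ioo τ₁ (τ₁ + a) = Ioo 0 a := by
      ext x
      simp only [mem_preimage, mem_Ioo]
      constructor
      · rintro ⟨h1, h2⟩; constructor <;> linarith
      · rintro ⟨h1, h2⟩; constructor <;> linarith
    have h := hmp.setLIntegral_comp_preimage_emb hemb
      (fun t => ENNReal.ofReal (K * (t - τ₁) ^ (-(s * p)))) (Ioo τ₁ (τ₁ + a))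
    rw [hpre] at h
    rw [← h]
    simp only [add_sub_cancel_right]
    exact houter
  -- conclusion
  rw [eq_top_iff]
  calc (⊤ : ENNReal) = ∫⁻ t in Ioo τ₁ (τ₁ + a), ENNReal.ofReal (K * (t - τ₁) ^ (-(s * p))) :=
        hshift.symm
    _ ≤ ∫⁻ t in Ioo τ₁ (τ₁ + a), ∫⁻ t' in Icc (0:ℝ) 1,
          ENNReal.ofReal (‖deriv γ t - deriv γ t'‖ ^ p / ‖γ t - γ t'‖ ^ (1 + s * p)) := by
        apply setLIntegral_mono' measurableSet_Ioo
        intro t ht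
        exact hinner t ht
    _ ≤ _ := by
        apply lintegral_mono_set
        intro x hx
        rw [mem_Ioo] at hx
        exact mem_Icc.mpr ⟨by linarith [hx.1], by linarith [hx.2]⟩
end

section
/- Let s ∈ (0,1), p ∈ (1,∞) with sp > 1, and let γ : ℝ/ℤ → ℝ² be an injective Lipschitz closed curve with constant speed such that γ' ∈ W^{s,p}(ℝ/ℤ, ℝ²) and γ is C¹ and regular. Then the energy ∬_{(ℝ/ℤ)²} |γ'(t) − γ'(t')|^p / |γ(t) − γ(t')|^{1+sp} dt dt' is finite. -/
open MeasureTheory Set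

set_option maxHeartbeats 1000000

/-- Bi-Lipschitz lower bound for an injective, regular, constant-speed C¹ closed curve. -/
theorem stmt7_bilip
    (γ : ℝ → ℂ) (hper : Function.Periodic γ 1)
    (hC1 : ContDiff ℝ 1 γ)
    (c : ℝ) (hc : 0 < c) (hspeed : ∀ t : ℝ, ‖deriv γ t‖ = c)
    (hinj : ∀ a b : ℝ, γ a = γ b → (a : AddCircle (1:ℝ)) = (b : ℝ)) :
    ∃ M > 0, ∀ t ∈ Icc (0:ℝ) 1, ∀ t' ∈ Icc (0:ℝ) 1,
      M * dist (t : AddCircle (1:ℝ)) (t' : ℝ) ≤ ‖γ t - γ t'‖ := by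
  have hcont : Continuous (deriv γ) := hC1.continuous_deriv le_rfl
  obtain ⟨δ, hδ0, hδ⟩ := Metric.uniformContinuousOn_iff.mp
    ((isCompact_Icc (a := (-1:ℝ)) (b := 2)).uniformContinuousOn_of_continuous
      hcont.continuousOn) (c/2) (by positivity)
  set δ2 : ℝ := min (δ/2) (1/2) with hδ2def
  have hδ2pos : 0 < δ2 := lt_min (by linarith) (by norm_num)
  have hδ2le : δ2 ≤ 1/2 := min_le_right _ _
  -- near-diagonal estimate
  have hnear : ∀ a ∈ Icc (-1:ℝ) 2, ∀ b ∈ Icc (-1:ℝ) 2, |a - b| ≤ δ2 →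
      c/2 * |a - b| ≤ ‖γ a - γ b‖ := by
    intro a ha b hb hab
    have hdiff : ∀ x ∈ uIcc b a, DifferentiableAt ℝ γ x :=
      fun x _ => hC1.differentiable one_ne_zero x
    have hint : IntervalIntegrable (deriv γ) volume b a :=
      hcont.intervalIntegrable _ _
    have hFTC : ∫ u in b..a, deriv γ u = γ a - γ b :=
      intervalIntegral.integral_deriv_eq_sub hdiff hint
    have hsplit : γ a - γ b = (a - b) • deriv γ b + ∫ u in b..a, (deriv γ u - deriv γ b) := by
      rw [intervalIntegral.integral_sub hint intervalIntegrable_const,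
        intervalIntegral.integral_const, ← hFTC]
      abel
    have hbd : ‖∫ u in b..a, (deriv γ u - deriv γ b)‖ ≤ c/2 * |a - b| := by
      have := intervalIntegral.norm_integral_le_of_norm_le_const
        (a := b) (b := a) (C := c/2) (f := fun u => deriv γ u - deriv γ b) ?_
      · calc ‖∫ u in b..a, (deriv γ u - deriv γ b)‖ ≤ c/2 * |a - b| := this
        _ = c/2 * |a - b| := rfl
      · intro x hx
        have hx' : x ∈ uIcc b a := uIoc_subset_uIcc hx
        have hxI : x ∈ Icc (-1:ℝ) 2 := by
          have : uIcc b a ⊆ Icc (-1:ℝ) 2 := by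
            rw [show Icc (-1:ℝ) 2 = uIcc (-1:ℝ) 2 from (uIcc_of_le (by norm_num)).symm]
            exact uIcc_subset_uIcc (by rw [uIcc_of_le (by norm_num)]; exact hb)
              (by rw [uIcc_of_le (by norm_num)]; exact ha)
          exact this hx'
        have hxb : dist x b ≤ |a - b| := by
          have := Real.dist_le_of_mem_uIcc hx' left_mem_uIcc
          simpa [Real.dist_eq, abs_sub_comm] using this
        have hxb' : dist x b < δ := lt_of_le_of_lt (hxb.trans hab)
          (lt_of_le_of_lt (min_le_left _ _) (by linarith))
        have h5 := (hδ x hxI b hb hxb').le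
        rwa [dist_eq_norm] at h5
    have h1 : ‖(a - b) • deriv γ b‖ = |a - b| * c := by
      rw [norm_smul, Real.norm_eq_abs, hspeed]
    have htri : ‖(a - b) • deriv γ b‖ - ‖∫ u in b..a, (deriv γ u - deriv γ b)‖ ≤ ‖γ a - γ b‖ := by
      rw [hsplit]
      have := norm_add_le ((a - b) • deriv γ b + (∫ u in b..a, (deriv γ u - deriv γ b)))
        (-(∫ u in b..a, (deriv γ u - deriv γ b)))
      simp only [add_neg_cancel_right, norm_neg] at this
      linarith
    rw [h1] at htri
    linarith
  -- far case: compactness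
  set S : Set (ℝ × ℝ) := (Icc (0:ℝ) 1 ×ˢ Icc (0:ℝ) 1) ∩
    {x : ℝ × ℝ | δ2 ≤ dist ((x.1 : AddCircle (1:ℝ))) ((x.2 : ℝ) : AddCircle (1:ℝ))} with hSdef
  have hgcont : Continuous (fun x : ℝ × ℝ =>
      dist ((x.1 : AddCircle (1:ℝ))) ((x.2 : ℝ) : AddCircle (1:ℝ))) :=
    (continuous_quotient_mk'.comp continuous_fst).dist
      (continuous_quotient_mk'.comp continuous_snd)
  have hScomp : IsCompact S :=
    (isCompact_Icc.prod isCompact_Icc).inter_right (isClosed_le continuous_const hgcont)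
  have hSne : S.Nonempty := by
    refine ⟨((0:ℝ), (1/2:ℝ)), ⟨⟨by norm_num, by norm_num⟩, ?_⟩⟩
    have : dist (((0:ℝ) : AddCircle (1:ℝ))) (((1/2:ℝ) : ℝ) : AddCircle (1:ℝ)) = 1/2 := by
      rw [dist_eq_norm, ← QuotientAddGroup.mk_sub, AddCircle.norm_eq]
      norm_num [round_eq]
    simp only [Set.mem_setOf_eq, this]
    exact hδ2le
  have hγc : Continuous γ := hC1.continuous
  have hfc : ContinuousOn (fun x : ℝ × ℝ => ‖γ x.1 - γ x.2‖) S :=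
    (((hγc.comp continuous_fst).sub (hγc.comp continuous_snd)).norm).continuousOn
  obtain ⟨x0, hx0S, hx0min⟩ := hScomp.exists_isMinOn hSne hfc
  set m : ℝ := ‖γ x0.1 - γ x0.2‖ with hmdef
  have hm : 0 < m := by
    have hne : ((x0.1 : AddCircle (1:ℝ))) ≠ ((x0.2 : ℝ) : AddCircle (1:ℝ)) := by
      have := hx0S.2
      simp only [Set.mem_setOf_eq] at this
      intro h
      rw [h, dist_self] at this
      linarith
    have : γ x0.1 ≠ γ x0.2 := fun h => hne (hinj _ _ h)
    simpa [hmdef, sub_eq_zero] using norm_pos_iff.mpr (sub_ne_zero.mpr this)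
  refine ⟨min (c/2) (2*m), lt_min (by positivity) (by positivity), ?_⟩
  intro t ht t' ht'
  set d : ℝ := dist ((t : AddCircle (1:ℝ))) ((t' : ℝ) : AddCircle (1:ℝ)) with hddef
  have hd0 : 0 ≤ d := dist_nonneg
  by_cases hcase : δ2 ≤ d
  · have hmem : ((t, t') : ℝ × ℝ) ∈ S := ⟨⟨ht, ht'⟩, hcase⟩
    have hmin : m ≤ ‖γ t - γ t'‖ := hx0min hmem
    have hdle : d ≤ 1/2 := by
      rw [hddef, dist_eq_norm]
      have := AddCircle.norm_le_half_period (1:ℝ) one_ne_zero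
        (x := ((t : AddCircle (1:ℝ)) - ((t' : ℝ) : AddCircle (1:ℝ))))
      rw [abs_one] at this
      linarith
    calc min (c/2) (2*m) * d ≤ (2*m) * (1/2) :=
          mul_le_mul (min_le_right _ _) hdle hd0 (by positivity)
    _ = m := by ring
    _ ≤ ‖γ t - γ t'‖ := hmin
  · push_neg at hcase
    set b : ℝ := t' + (round (t - t') : ℝ) with hbdef
    have hdeq : d = |t - b| := by
      rw [hddef, dist_eq_norm, ← QuotientAddGroup.mk_sub, AddCircle.norm_eq, hbdef]
      norm_num
      ring_nf
    have hγb : γ b = γ t' := by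
      have := (hper.int_mul (round (t - t'))) t'
      simpa [hbdef] using this
    have hdhalf : |t - b| ≤ 1/2 := by
      rw [← hdeq]; linarith
    have habs := abs_le.mp hdhalf
    have hbmem : b ∈ Icc (-1:ℝ) 2 := by
      constructor
      · have := ht.1; linarith [habs.2]
      · have := ht.2; linarith [habs.1]
    have htmem : t ∈ Icc (-1:ℝ) 2 := ⟨by linarith [ht.1], by linarith [ht.2]⟩
    have hb2 : |t - b| ≤ δ2 := by rw [← hdeq]; exact hcase.le
    calc min (c/2) (2*m) * d ≤ c/2 * |t - b| := by
          rw [← hdeq]; exact mul_le_mul_of_nonneg_right (min_le_left _ _) hd0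
    _ ≤ ‖γ t - γ b‖ := hnear t htmem b hbmem hb2
    _ = ‖γ t - γ t'‖ := by rw [hγb]

/-- converse: for s ∈ (0,1), p ∈ (1,∞), sp > 1, an injective (on ℝ/ℤ),
regular C¹, constant-speed Lipschitz closed curve with γ' ∈ W^{s,p}(ℝ/ℤ) has finite
tangent-oscillation energy. -/
theorem stmt_7 (s p : ℝ) (hs : s ∈ Ioo (0:ℝ) 1) (hp : 1 < p) (hsp : 1 < s * p)
    (γ : ℝ → ℂ) (hper : Function.Periodic γ 1)
    (K : NNReal) (hlip : LipschitzWith K γ)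
    (hC1 : ContDiff ℝ 1 γ) (hreg : ∀ t : ℝ, deriv γ t ≠ 0)
    (c : ℝ) (hc : 0 < c) (hspeed : ∀ t : ℝ, ‖deriv γ t‖ = c)
    (hinj : ∀ a b : ℝ, γ a = γ b → (a : AddCircle (1:ℝ)) = (b : ℝ))
    (hW : (∫⁻ t in Icc (0:ℝ) 1, ∫⁻ t' in Icc (0:ℝ) 1,
        ENNReal.ofReal (‖deriv γ t - deriv γ t'‖ ^ p /
          (dist (t : AddCircle (1:ℝ)) (t' : ℝ)) ^ (1 + s * p))) ≠ ⊤) :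
    (∫⁻ t in Icc (0:ℝ) 1, ∫⁻ t' in Icc (0:ℝ) 1,
        ENNReal.ofReal (‖deriv γ t - deriv γ t'‖ ^ p / ‖γ t - γ t'‖ ^ (1 + s * p))) ≠ ⊤ := by
  obtain ⟨M, hM, hMb⟩ := stmt7_bilip γ hper hC1 c hc hspeed hinj
  set q : ℝ := 1 + s * p with hq
  have hq0 : 0 < q := by nlinarith
  set C : ℝ := M ^ (-q) with hC
  have hC0 : 0 ≤ C := Real.rpow_nonneg hM.le _
  -- derivative is periodic
  have hderper : ∀ x : ℝ, ∀ n : ℤ, deriv γ (x + (n : ℝ)) = deriv γ x := by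
    intro x n
    have heq : (fun y => γ (y + (n : ℝ))) = γ := funext fun y => by
      simpa using (hper.int_mul n) y
    calc deriv γ (x + (n : ℝ)) = deriv (fun y => γ (y + (n : ℝ))) x :=
          (deriv_comp_add_const γ _ x).symm
    _ = deriv γ x := by rw [heq]
  -- pointwise bound
  have key : ∀ t ∈ Icc (0:ℝ) 1, ∀ t' ∈ Icc (0:ℝ) 1,
      ENNReal.ofReal (‖deriv γ t - deriv γ t'‖ ^ p / ‖γ t - γ t'‖ ^ q) ≤
        ENNReal.ofReal C *
          ENNReal.ofReal (‖deriv γ t - deriv γ t'‖ ^ p /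
            (dist (t : AddCircle (1:ℝ)) (t' : ℝ)) ^ q) := by
    intro t ht t' ht'
    set d : ℝ := dist ((t : AddCircle (1:ℝ))) ((t' : ℝ) : AddCircle (1:ℝ)) with hddef
    rcases eq_or_lt_of_le (dist_nonneg (x := ((t : AddCircle (1:ℝ)))) (y := ((t' : ℝ) : AddCircle (1:ℝ)))) with h0 | hdpos
    · -- t and t' are equal mod 1 : numerator vanishes
      have hcoe : ((t : AddCircle (1:ℝ))) = ((t' : ℝ) : AddCircle (1:ℝ)) :=
        dist_eq_zero.mp h0.symm
      obtain ⟨n, hn⟩ : ∃ n : ℤ, t = t' + (n : ℝ) := by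
        have h1 := QuotientAddGroup.eq_iff_sub_mem.mp hcoe.symm
        obtain ⟨n, hn⟩ := AddSubgroup.mem_zmultiples_iff.mp h1
        refine ⟨-n, ?_⟩
        rw [zsmul_eq_mul, mul_one] at hn
        push_cast
        linarith
      have hdd : deriv γ t = deriv γ t' := by rw [hn]; exact hderper t' n
      rw [hdd]
      simp only [sub_self, norm_zero]
      rw [Real.zero_rpow (by positivity), zero_div, ENNReal.ofReal_zero]
      exact zero_le
    · have hM' : M * d ≤ ‖γ t - γ t'‖ := hMb t ht t' ht'
      have hMd : 0 < M * d := by positivity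
      have hnorm : 0 < ‖γ t - γ t'‖ := lt_of_lt_of_le hMd hM'
      rw [← ENNReal.ofReal_mul hC0]
      apply ENNReal.ofReal_le_ofReal
      have h2 : (M * d) ^ q ≤ ‖γ t - γ t'‖ ^ q :=
        Real.rpow_le_rpow hMd.le hM' hq0.le
      have h3 : ‖deriv γ t - deriv γ t'‖ ^ p / ‖γ t - γ t'‖ ^ q ≤
          ‖deriv γ t - deriv γ t'‖ ^ p / (M * d) ^ q := by
        exact div_le_div_of_nonneg_left (Real.rpow_nonneg (norm_nonneg _) _)
          (Real.rpow_pos_of_pos hMd _) h2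
      refine h3.trans (le_of_eq ?_)
      rw [Real.mul_rpow hM.le hdpos.le, hC, Real.rpow_neg hM.le]
      have hMq : M ^ q ≠ 0 := (Real.rpow_pos_of_pos hM _).ne'
      have hdq : d ^ q ≠ 0 := (Real.rpow_pos_of_pos hdpos _).ne'
      field_simp
      rw [hddef]
  -- assemble
  have hCtop : (ENNReal.ofReal C) ≠ ⊤ := ENNReal.ofReal_ne_top
  have hle : (∫⁻ t in Icc (0:ℝ) 1, ∫⁻ t' in Icc (0:ℝ) 1,
        ENNReal.ofReal (‖deriv γ t - deriv γ t'‖ ^ p / ‖γ t - γ t'‖ ^ q)) ≤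
      ENNReal.ofReal C * (∫⁻ t in Icc (0:ℝ) 1, ∫⁻ t' in Icc (0:ℝ) 1,
        ENNReal.ofReal (‖deriv γ t - deriv γ t'‖ ^ p /
          (dist (t : AddCircle (1:ℝ)) (t' : ℝ)) ^ q)) := by
    rw [← lintegral_const_mul' _ _ hCtop]
    apply lintegral_mono_ae
    filter_upwards [ae_restrict_mem measurableSet_Icc] with t ht
    rw [← lintegral_const_mul' _ _ hCtop]
    apply lintegral_mono_ae
    filter_upwards [ae_restrict_mem measurableSet_Icc] with t' ht'
    exact key t ht t' ht'
  exact ne_top_of_le_ne_top (ENNReal.mul_ne_top hCtop hW) hle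
end

section
/- Let γ_ε : ℝ/ℤ → ℝ² be constant-speed Lipschitz closed curves converging uniformly to a Lipschitz closed curve γ as ε → 0, with |int(γ_ε)| = ε, ω(γ_ε, x) ∈ {0,1} off the images, and all images contained in a fixed bounded set. Then ω(γ, x) = 0 for every x ∉ γ(ℝ/ℤ), i.e., |int(γ)| = 0. -/
set_option maxHeartbeats 1000000

open MeasureTheory Set Filter

open intervalIntegral Topology
open scoped Interval


/-- Winding number of a closed curve (1-periodic map ℝ → ℂ) around a point. -/
noncomputable def winding (γ : ℝ → ℂ) (x : ℂ) : ℂ :=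
  (2 * Real.pi * Complex.I)⁻¹ * ∫ t in (0:ℝ)..1, deriv γ t / (γ t - x)

/-- The interior of a closed curve: points off the image with winding number one. -/
def curveInterior (γ : ℝ → ℂ) : Set ℂ :=
  {x | x ∉ Set.range γ ∧ winding γ x = 1}

lemma lip_slope_tendsto {f : ℝ → ℂ} (x : ℝ) {l : ℂ} (h : HasDerivAt f l x) :
    Tendsto (fun n : ℕ => ((n:ℝ)+1) • (f (x + 1/((n:ℝ)+1)) - f x)) atTop (𝓝 l) := by
  have hs := hasDerivAt_iff_tendsto_slope.1 h
  have ht : Tendsto (fun n : ℕ => x + 1/((n:ℝ)+1)) atTop (𝓝[≠] x) := by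
    apply tendsto_nhdsWithin_of_tendsto_nhds_of_eventually_within
    · have : Tendsto (fun n : ℕ => 1/((n:ℝ)+1)) atTop (𝓝 0) := tendsto_one_div_add_atTop_nhds_zero_nat
      simpa using (tendsto_const_nhds.add this)
    · filter_upwards with n
      have h1 : (0:ℝ) < 1/((n:ℝ)+1) := by positivity
      simp only [mem_compl_iff, mem_singleton_iff]
      intro hcon
      nlinarith [h1, hcon]
  have h2 := hs.comp ht
  refine h2.congr (fun n => ?_)
  have hn : (0:ℝ) < 1/((n:ℝ)+1) := by positivity
  simp only [Function.comp, slope, vsub_eq_sub, add_sub_cancel_left, one_div, inv_inv]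

lemma lip_ftc {f : ℝ → ℂ} {L : NNReal} (hf : LipschitzWith L f) {a b : ℝ} (hab : a ≤ b) :
    ∫ t in a..b, deriv f t = f b - f a := by
  have hcont : Continuous f := hf.continuous
  -- Step 1: value of ∫ φ n
  have hint : ∀ (u v : ℝ), IntervalIntegrable f volume u v := fun u v =>
    hcont.intervalIntegrable u v
  have step1 : ∀ n : ℕ, ∫ t in a..b, ((n:ℝ)+1) • (f (t + 1/((n:ℝ)+1)) - f t)
      = ((n:ℝ)+1) • ((∫ t in b..(b + 1/((n:ℝ)+1)), f t) - ∫ t in a..(a + 1/((n:ℝ)+1)), f t) := by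
    intro n
    set h := 1/((n:ℝ)+1) with hh
    have hint2 : IntervalIntegrable (fun t => f (t + h)) volume a b :=
      (hcont.comp (continuous_add_right h)).intervalIntegrable a b
    have e2 : ∫ t in a..b, ((n:ℝ)+1) • (f (t + h) - f t)
        = ((n:ℝ)+1) • ((∫ t in a..b, f (t + h)) - ∫ t in a..b, f t) := by
      rw [intervalIntegral.integral_smul, intervalIntegral.integral_sub hint2 (hint a b)]
    have e3 : (∫ t in a..b, f (t + h)) = ∫ t in (a+h)..(b+h), f t := by simp
    rw [show (∫ t in a..b, ((n:ℝ)+1) • (f (t + 1/((n:ℝ)+1)) - f t))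
        = ∫ t in a..b, ((n:ℝ)+1) • (f (t + h) - f t) from rfl, e2, e3]
    congr 1
    have d1 : (∫ t in (a+h)..(b+h), f t) = (∫ t in (a+h)..b, f t) + ∫ t in b..(b+h), f t :=
      (intervalIntegral.integral_add_adjacent_intervals (hint _ _) (hint _ _)).symm
    have d2 : (∫ t in a..b, f t) = (∫ t in a..(a+h), f t) + ∫ t in (a+h)..b, f t :=
      (intervalIntegral.integral_add_adjacent_intervals (hint _ _) (hint _ _)).symm
    rw [d1, d2]; ring
  -- Step 2: RHS tendsto
  have step2 : ∀ x : ℝ, Tendsto (fun n : ℕ => ((n:ℝ)+1) • ∫ t in x..(x + 1/((n:ℝ)+1)), f t)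
      atTop (𝓝 (f x)) := by
    intro x
    have hDA : HasDerivAt (fun u => ∫ t in x..u, f t) (f x) x :=
      intervalIntegral.integral_hasDerivAt_right (hint x x)
        (hcont.stronglyMeasurableAtFilter _ _) hcont.continuousAt
    have := lip_slope_tendsto x hDA
    simpa using this
  have rhs : Tendsto (fun n : ℕ => ((n:ℝ)+1) •
      ((∫ t in b..(b + 1/((n:ℝ)+1)), f t) - ∫ t in a..(a + 1/((n:ℝ)+1)), f t))
      atTop (𝓝 (f b - f a)) := by
    have := (step2 b).sub (step2 a)
    simpa [smul_sub] using this
  -- Step 3: dominated convergence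
  have lhs : Tendsto (fun n : ℕ => ∫ t in a..b, ((n:ℝ)+1) • (f (t + 1/((n:ℝ)+1)) - f t)) atTop (𝓝 (∫ t in a..b, deriv f t)) := by
    apply intervalIntegral.tendsto_integral_filter_of_dominated_convergence
      (fun _ => (L:ℝ))
    · filter_upwards with n
      exact (((hcont.comp (continuous_add_right _)).sub hcont).const_smul ((n:ℝ)+1)).aestronglyMeasurable
    · filter_upwards with n
      filter_upwards with t _
      have hb : ‖f (t + 1/((n:ℝ)+1)) - f t‖ ≤ (L:ℝ) * (1/((n:ℝ)+1)) := by
        have := hf.dist_le_mul (t + 1/((n:ℝ)+1)) t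
        simp only [Complex.dist_eq, Real.dist_eq, add_sub_cancel_left] at this
        rwa [abs_of_pos (by positivity)] at this
      have hn : (0:ℝ) < ((n:ℝ)+1) := by positivity
      calc ‖((n:ℝ)+1) • (f (t + 1/((n:ℝ)+1)) - f t)‖ = ((n:ℝ)+1) * ‖f (t + 1/((n:ℝ)+1)) - f t‖ := by
            rw [norm_smul, Real.norm_eq_abs, abs_of_pos hn]
        _ ≤ ((n:ℝ)+1) * ((L:ℝ) * (1/((n:ℝ)+1))) := by
            exact mul_le_mul_of_nonneg_left hb hn.le
        _ = (L:ℝ) := by field_simp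
    · exact intervalIntegrable_const
    · filter_upwards [hf.ae_differentiableAt (μ := volume)] with t ht _
      exact lip_slope_tendsto t ht.hasDerivAt
  have := lhs.congr (fun n => (step1 n))
  exact tendsto_nhds_unique this rhs

lemma bdd_intervalIntegrable {f : ℝ → ℂ}
    (hm : AEStronglyMeasurable f (volume.restrict (Ι (0:ℝ) 1)))
    {C : ℝ} (hC : ∀ t, ‖f t‖ ≤ C) : IntervalIntegrable f volume 0 1 := by
  rw [intervalIntegrable_iff]
  refine ⟨hm, ?_⟩
  apply MeasureTheory.HasFiniteIntegral.restrict_of_bounded (C := C)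
  · simp [Real.volume_Ioc]
  · filter_upwards with t using hC t

lemma lipschitzWith_const_mul {c : ℂ} {f : ℝ → ℂ} {L : NNReal} (hf : LipschitzWith L f) :
    LipschitzWith (‖c‖₊ * L) (fun t => c * f t) := by
  have h1 : LipschitzWith ‖c‖₊ (fun z : ℂ => c * z) := by
    simpa [smul_eq_mul] using lipschitzWith_smul (β := ℂ) c
  exact h1.comp hf

lemma lip_div {u v : ℝ → ℂ} {Lu Lv : NNReal} {Mu mv : ℝ}
    (hu : LipschitzWith Lu u) (hv : LipschitzWith Lv v)
    (hMu : ∀ t, ‖u t‖ ≤ Mu) (hmv : 0 < mv) (hv' : ∀ t, mv ≤ ‖v t‖) :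
    ∃ K : NNReal, LipschitzWith K (fun t => u t / v t) := by
  have hMu0 : 0 ≤ Mu := le_trans (norm_nonneg _) (hMu 0)
  refine ⟨Real.toNNReal ((Lu:ℝ)/mv + Mu*(Lv:ℝ)/(mv*mv)), LipschitzWith.of_dist_le_mul fun s t => ?_⟩
  have hvs := hv' s; have hvt := hv' t
  have hvs0 : v s ≠ 0 := by intro h; rw [h, norm_zero] at hvs; linarith
  have hvt0 : v t ≠ 0 := by intro h; rw [h, norm_zero] at hvt; linarith
  have key : u s / v s - u t / v t = (u s - u t)/v s + u t * (v t - v s)/(v s * v t) := by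
    field_simp; ring
  have h1 : ‖u s - u t‖ ≤ (Lu:ℝ) * dist s t := by
    have := hu.dist_le_mul s t; rwa [Complex.dist_eq] at this
  have h2 : ‖v t - v s‖ ≤ (Lv:ℝ) * dist s t := by
    have := hv.dist_le_mul t s
    rwa [Complex.dist_eq, dist_comm t s] at this
  have b1 : ‖(u s - u t)/v s‖ ≤ (Lu:ℝ) * dist s t / mv := by
    rw [norm_div]
    exact div_le_div₀ (by positivity) h1 hmv hvs
  have b2 : ‖u t * (v t - v s)/(v s * v t)‖ ≤ Mu * ((Lv:ℝ) * dist s t) / (mv * mv) := by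
    rw [norm_div, norm_mul, norm_mul]
    apply div_le_div₀ (by positivity)
    · exact mul_le_mul (hMu t) h2 (norm_nonneg _) hMu0
    · positivity
    · exact mul_le_mul hvs hvt (by positivity) (le_trans hmv.le hvs)
  have hd : dist (u s / v s) (u t / v t) = ‖u s / v s - u t / v t‖ := Complex.dist_eq _ _
  rw [hd, key, Real.coe_toNNReal _ (by positivity)]
  calc ‖(u s - u t)/v s + u t * (v t - v s)/(v s * v t)‖
      ≤ ‖(u s - u t)/v s‖ + ‖u t * (v t - v s)/(v s * v t)‖ := norm_add_le _ _
    _ ≤ (Lu:ℝ) * dist s t / mv + Mu * ((Lv:ℝ) * dist s t) / (mv * mv) := add_le_add b1 b2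
    _ = ((Lu:ℝ)/mv + Mu*(Lv:ℝ)/(mv*mv)) * dist s t := by field_simp

lemma winding_eq_of_close {γ₁ γ₂ : ℝ → ℂ} {L₁ L₂ : NNReal}
    (h₁ : LipschitzWith L₁ γ₁) (h₂ : LipschitzWith L₂ γ₂)
    (hp₁ : Function.Periodic γ₁ 1) (hp₂ : Function.Periodic γ₂ 1)
    {x : ℂ} {d : ℝ} (hd : 0 < d)
    (hfar : ∀ t, d ≤ ‖γ₁ t - x‖) (hclose : ∀ t, ‖γ₂ t - γ₁ t‖ ≤ d / 3) :
    winding γ₂ x = winding γ₁ x := by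
  classical
  set W : ℝ → ℂ := fun t => deriv γ₂ t - deriv γ₁ t with hW
  set u : ℝ → ℂ := fun t => γ₂ t - γ₁ t with hu
  set den : ℝ → ℝ → ℂ := fun s t => γ₁ t + (s:ℂ) * u t - x with hden
  set num : ℝ → ℝ → ℂ := fun s t => deriv γ₁ t + (s:ℂ) * W t with hnum
  set F : ℝ → ℝ → ℂ := fun s t => num s t / den s t with hF
  set G : ℝ → ℝ → ℂ := fun s t => W t / den s t - num s t * u t / den s t ^ 2 with hG
  have hWb : ∀ t, ‖W t‖ ≤ (L₂:ℝ) + (L₁:ℝ) := fun t =>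
    (norm_sub_le _ _).trans (add_le_add (norm_deriv_le_of_lipschitz h₂)
      (norm_deriv_le_of_lipschitz h₁))
  have hub : ∀ t, ‖u t‖ ≤ d/3 := hclose
  have hdenlb : ∀ s t, |s| ≤ 2 → d/3 ≤ ‖den s t‖ := by
    intro s t hs
    have e : (γ₁ t - x) - den s t = -((s:ℂ) * u t) := by rw [hden]; ring
    have h1 : ‖(γ₁ t - x) - den s t‖ = |s| * ‖u t‖ := by
      rw [e, norm_neg, norm_mul, Complex.norm_real, Real.norm_eq_abs]
    have h2 := norm_sub_norm_le (γ₁ t - x) (den s t)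
    rw [h1] at h2
    have h3 : |s| * ‖u t‖ ≤ 2 * (d/3) :=
      mul_le_mul hs (hub t) (norm_nonneg _) (by norm_num)
    have h4 := hfar t
    linarith
  have hdenne : ∀ s t, |s| ≤ 2 → den s t ≠ 0 := by
    intro s t hs h0
    have := hdenlb s t hs; rw [h0, norm_zero] at this; linarith
  have hnumb : ∀ s t, |s| ≤ 2 → ‖num s t‖ ≤ (L₁:ℝ) + 2 * ((L₂:ℝ)+(L₁:ℝ)) := by
    intro s t hs
    refine (norm_add_le _ _).trans (add_le_add (norm_deriv_le_of_lipschitz h₁) ?_)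
    rw [norm_mul, Complex.norm_real, Real.norm_eq_abs]
    exact mul_le_mul hs (hWb t) (norm_nonneg _) (by norm_num)
  -- measurability
  have hm1 : Measurable (fun t => deriv γ₁ t) := measurable_deriv γ₁
  have hm2 : Measurable (fun t => deriv γ₂ t) := measurable_deriv γ₂
  have hmW : Measurable W := by rw [hW]; exact hm2.sub hm1
  have hmu : Measurable u := by rw [hu]; exact h₂.continuous.measurable.sub h₁.continuous.measurable
  have hmden : ∀ s, Measurable (fun t => den s t) := by
    intro s; rw [hden]
    exact (h₁.continuous.measurable.add (hmu.const_mul _)).sub measurable_const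
  have hmnum : ∀ s, Measurable (fun t => num s t) := by
    intro s; rw [hnum]; exact hm1.add (hmW.const_mul _)
  have hmeasF : ∀ s, AEStronglyMeasurable (F s) (volume.restrict (Ι (0:ℝ) 1)) := by
    intro s
    exact (((hmnum s).div (hmden s))).aestronglyMeasurable
  have hmeasG : ∀ s, AEStronglyMeasurable (G s) (volume.restrict (Ι (0:ℝ) 1)) := by
    intro s
    exact ((hmW.div (hmden s)).sub (((hmnum s).mul hmu).div ((hmden s).pow measurable_const))).aestronglyMeasurable
  set C₁ : ℝ := ((L₁:ℝ) + 2 * ((L₂:ℝ)+(L₁:ℝ))) / (d/3) with hC₁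
  set C₂ : ℝ := ((L₂:ℝ) + (L₁:ℝ)) / (d/3) + ((L₁:ℝ) + 2 * ((L₂:ℝ)+(L₁:ℝ))) * (d/3) / ((d/3)^2) with hC₂
  have hFb : ∀ s t, |s| ≤ 2 → ‖F s t‖ ≤ C₁ := by
    intro s t hs
    rw [hF, norm_div, hC₁]
    exact div_le_div₀ (by positivity) (hnumb s t hs) (by positivity) (hdenlb s t hs)
  have hGb : ∀ s t, |s| ≤ 2 → ‖G s t‖ ≤ C₂ := by
    intro s t hs
    rw [hG, hC₂]
    refine (norm_sub_le _ _).trans (add_le_add ?_ ?_)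
    · rw [norm_div]
      exact div_le_div₀ (by positivity) (hWb t) (by positivity) (hdenlb s t hs)
    · rw [norm_div, norm_mul, norm_pow]
      refine div_le_div₀ (by positivity) (mul_le_mul (hnumb s t hs) (hub t) (norm_nonneg _) (by positivity)) (by positivity) ?_
      exact pow_le_pow_left₀ (by positivity) (hdenlb s t hs) 2
  -- derivative in s of the integral
  have key : ∀ s₀ ∈ Icc (0:ℝ) 1,
      HasDerivAt (fun s => ∫ t in (0:ℝ)..1, F s t) (∫ t in (0:ℝ)..1, G s₀ t) s₀ := by
    intro s₀ hs₀
    have habs : ∀ s ∈ Metric.ball s₀ (1/2 : ℝ), |s| ≤ 2 := by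
      intro s hs
      rw [Metric.mem_ball, Real.dist_eq] at hs
      rcases hs₀ with ⟨ha, hb⟩
      have := abs_lt.1 hs
      rw [abs_le]; constructor <;> [linarith [this.1]; linarith [this.2] ]
    have habs₀ : |s₀| ≤ 2 := by
      rcases hs₀ with ⟨ha, hb⟩; rw [abs_le]; constructor <;> linarith
    refine (intervalIntegral.hasDerivAt_integral_of_dominated_loc_of_deriv_le
      (F := F) (F' := G) (bound := fun _ => C₂) (Metric.ball_mem_nhds s₀ one_half_pos)
      (Eventually.of_forall hmeasF) ?_ (hmeasG s₀) ?_ intervalIntegrable_const ?_).2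
    · exact bdd_intervalIntegrable (hmeasF s₀) (fun t => hFb s₀ t habs₀)
    · filter_upwards with t _ s hs
      exact hGb s t (habs s hs)
    · filter_upwards with t _ s hs
      have hof : HasDerivAt (fun s : ℝ => ((s:ℝ):ℂ)) 1 s := by
        simpa using (hasDerivAt_id s).ofReal_comp
      have hnum' : HasDerivAt (fun s : ℝ => num s t) (W t) s := by
        rw [hnum]
        simpa using (hof.mul_const (W t)).const_add (deriv γ₁ t)
      have hden' : HasDerivAt (fun s : ℝ => den s t) (u t) s := by
        rw [hden]
        simpa using ((hof.mul_const (u t)).const_add (γ₁ t)).sub_const x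
      have hne := hdenne s t (habs s hs)
      have hdiv := hnum'.div hden' hne
      have heq : (W t * den s t - num s t * u t) / den s t ^ 2 = G s t := by
        rw [hG]; field_simp
      rw [hF, ← heq]
      exact hdiv
  -- the derivative is zero
  have hzero : ∀ s₀ ∈ Icc (0:ℝ) 1, (∫ t in (0:ℝ)..1, G s₀ t) = 0 := by
    intro s₀ hs₀
    have habs₀ : |s₀| ≤ 2 := by
      rcases hs₀ with ⟨ha, hb⟩; rw [abs_le]; constructor <;> linarith
    have hulip : LipschitzWith (L₂ + L₁) u := by rw [hu]; exact h₂.sub h₁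
    have hdenlip : LipschitzWith (L₁ + ‖((s₀:ℝ):ℂ)‖₊ * (L₂ + L₁)) (fun t => den s₀ t) := by
      have hc : LipschitzWith (‖((s₀:ℝ):ℂ)‖₊ * (L₂+L₁)) (fun t => ((s₀:ℝ):ℂ) * u t) :=
        lipschitzWith_const_mul hulip
      rw [hden]
      intro a b
      have := (h₁.add hc) a b
      simpa [edist_sub_right] using this
    obtain ⟨K, hK⟩ := lip_div hulip hdenlip hub (by positivity : (0:ℝ) < d/3)
      (fun t => hdenlb s₀ t habs₀)
    have hup : Function.Periodic u 1 := by rw [hu]; exact hp₂.sub hp₁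
    have hFTC := lip_ftc hK (zero_le_one (α := ℝ))
    have hu10 : u 1 = u 0 := by simpa using hup 0
    have hg10 : γ₁ 1 = γ₁ 0 := by simpa using hp₁ 0
    have hden10 : den s₀ 1 = den s₀ 0 := by rw [hden]; simp [hu10, hg10]
    have hper : u 1 / den s₀ 1 - u 0 / den s₀ 0 = 0 := by rw [hu10, hden10, sub_self]
    have hcong : (∫ t in (0:ℝ)..1, G s₀ t) = ∫ t in (0:ℝ)..1, deriv (fun t => u t / den s₀ t) t := by
      apply intervalIntegral.integral_congr_ae
      filter_upwards [h₁.ae_differentiableAt (μ := volume),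
        h₂.ae_differentiableAt (μ := volume)] with t ht1 ht2 _
      have hu' : HasDerivAt u (W t) t := by
        rw [hu, hW]; exact ht2.hasDerivAt.sub ht1.hasDerivAt
      have hden' : HasDerivAt (fun t => den s₀ t) (num s₀ t) t := by
        rw [hden, hnum]
        have hW' : HasDerivAt (fun t => ((s₀:ℝ):ℂ) * u t) (((s₀:ℝ):ℂ) * W t) t :=
          hu'.const_mul _
        have := (ht1.hasDerivAt.add hW').sub_const x
        simpa [hu, hW] using this
      have hne := hdenne s₀ t habs₀
      have hψ' : HasDerivAt (fun t => u t / den s₀ t)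
        ((W t * den s₀ t - u t * num s₀ t)/(den s₀ t)^2) t := hu'.div hden' hne
      rw [hψ'.deriv, hG]
      field_simp
    rw [hcong, hFTC]
    simpa using hper
  -- conclude
  have hw10 : (∫ t in (0:ℝ)..1, F 1 t) = ∫ t in (0:ℝ)..1, F 0 t := by
    have hderiv : ∀ s ∈ Icc (0:ℝ) 1,
        HasDerivWithinAt (fun s => ∫ t in (0:ℝ)..1, F s t) 0 (Icc (0:ℝ) 1) s := by
      intro s hs
      have h := key s hs
      rw [hzero s hs] at h
      exact h.hasDerivWithinAt
    have hb := norm_image_sub_le_of_norm_deriv_le_segment'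
      (f' := fun _ => (0:ℂ)) (C := 0) hderiv (fun s _ => by simp) 1 (right_mem_Icc.2 zero_le_one)
    simp only [zero_mul, sub_zero, mul_one] at hb
    exact sub_eq_zero.1 (norm_le_zero_iff.1 hb)
  have e2 : (∫ t in (0:ℝ)..1, deriv γ₂ t / (γ₂ t - x)) = ∫ t in (0:ℝ)..1, F 1 t := by
    apply intervalIntegral.integral_congr
    intro t _
    simp only [hF, hnum, hden, hW, hu, Complex.ofReal_one, one_mul]
    congr 1 <;> ring
  have e1 : (∫ t in (0:ℝ)..1, deriv γ₁ t / (γ₁ t - x)) = ∫ t in (0:ℝ)..1, F 0 t := by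
    apply intervalIntegral.integral_congr
    intro t _
    simp [hF, hnum, hden]
  unfold winding
  rw [e2, hw10, e1]

/-- if constant-speed Lipschitz closed curves γ_ε with |int γ_ε| = ε,
winding numbers in {0,1} and images in a fixed bounded set converge uniformly to a
Lipschitz closed curve γ as ε → 0⁺, then γ has zero winding number off its image
(hence |int γ| = 0). -/
theorem stmt_17 (c : ℝ → ℝ → ℂ) (γ : ℝ → ℂ)
    (hper : ∀ ε ∈ Ioo (0:ℝ) 1, Function.Periodic (c ε) 1)
    (hlip : ∀ ε ∈ Ioo (0:ℝ) 1, ∃ L : NNReal, LipschitzWith L (c ε))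
    (hspeed : ∀ ε ∈ Ioo (0:ℝ) 1, ∃ ℓ > (0:ℝ), ∀ᵐ t : ℝ, ‖deriv (c ε) t‖ = ℓ)
    (harea : ∀ ε ∈ Ioo (0:ℝ) 1, volume (curveInterior (c ε)) = ENNReal.ofReal ε)
    (hw : ∀ ε ∈ Ioo (0:ℝ) 1, ∀ x ∉ Set.range (c ε),
      winding (c ε) x = 0 ∨ winding (c ε) x = 1)
    (R : ℝ) (hR : 0 < R) (hball : ∀ ε ∈ Ioo (0:ℝ) 1, Set.range (c ε) ⊆ Metric.ball (0:ℂ) R)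
    (hper₀ : Function.Periodic γ 1) (K₀ : NNReal) (hlip₀ : LipschitzWith K₀ γ)
    (hunif : TendstoUniformly c γ (nhdsWithin (0:ℝ) (Ioi 0))) :
    (∀ x ∉ Set.range γ, winding γ x = 0) ∧ volume (curveInterior γ) = 0 := by
  have hcγ : Continuous γ := hlip₀.continuous
  have hrange : IsCompact (Set.range γ) := by
    rw [← hper₀.image_Icc one_pos 0]
    exact isCompact_Icc.image hcγ
  have key : ∀ x ∉ Set.range γ, winding γ x = 0 := by
    intro x hx
    have hne : (Set.range γ).Nonempty := ⟨γ 0, 0, rfl⟩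
    have hdpos : 0 < Metric.infDist x (Set.range γ) :=
      (hrange.isClosed.notMem_iff_infDist_pos hne).1 hx
    set d := Metric.infDist x (Set.range γ) with hdd
    have hfar : ∀ t, d ≤ ‖γ t - x‖ := by
      intro t
      have h1 : d ≤ dist x (γ t) := Metric.infDist_le_dist_of_mem (mem_range_self t)
      rwa [dist_comm, Complex.dist_eq] at h1
    have hev1 : ∀ᶠ ε in nhdsWithin (0:ℝ) (Ioi 0), ε ∈ Ioo (0:ℝ) 1 :=
      Ioo_mem_nhdsGT_of_mem (by constructor <;> norm_num)
    have hev2 : ∀ᶠ ε in nhdsWithin (0:ℝ) (Ioi 0), ∀ t, dist (γ t) (c ε t) < d/9 :=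
      Metric.tendstoUniformly_iff.mp hunif (d/9) (by positivity)
    set r := d/3 with hr
    have hVpos : 0 < volume (Metric.ball x r) := Metric.measure_ball_pos _ _ (by positivity)
    have hev3 : ∀ᶠ ε in nhdsWithin (0:ℝ) (Ioi 0),
        ENNReal.ofReal ε < volume (Metric.ball x r) := by
      rcases eq_top_or_lt_top (volume (Metric.ball x r)) with hT | hT
      · filter_upwards with ε; rw [hT]; exact ENNReal.ofReal_lt_top
      · set v := (volume (Metric.ball x r)).toReal with hv
        have hv0 : 0 < v := ENNReal.toReal_pos hVpos.ne' hT.ne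
        have hevv : ∀ᶠ ε in nhdsWithin (0:ℝ) (Ioi 0), ε < v :=
          eventually_nhdsWithin_of_eventually_nhds (eventually_lt_nhds hv0)
        filter_upwards [hevv] with ε hε
        have : ENNReal.ofReal ε < ENNReal.ofReal v := (ENNReal.ofReal_lt_ofReal_iff hv0).2 hε
        rwa [hv, ENNReal.ofReal_toReal hT.ne] at this
    obtain ⟨ε, hIoo, hdist, hvol⟩ := (hev1.and (hev2.and hev3)).exists
    obtain ⟨L, hLlip⟩ := hlip ε hIoo
    have hclose9 : ∀ t, ‖c ε t - γ t‖ ≤ d/9 := by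
      intro t
      have h2 := (hdist t).le
      rwa [dist_comm, Complex.dist_eq] at h2
    have hclose3 : ∀ t, ‖c ε t - γ t‖ ≤ d/3 := fun t => (hclose9 t).trans (by linarith)
    have hwx : winding (c ε) x = winding γ x :=
      winding_eq_of_close hlip₀ hLlip hper₀ (hper ε hIoo) hdpos hfar hclose3
    have hxnot : x ∉ Set.range (c ε) := by
      rintro ⟨t, ht⟩
      have h2 := hclose9 t
      rw [ht] at h2
      have h3 : ‖γ t - x‖ ≤ d/9 := by rw [norm_sub_rev]; exact h2
      have := hfar t
      linarith
    rcases hw ε hIoo x hxnot with h0 | h1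
    · rw [← hwx, h0]
    · exfalso
      have hsub : Metric.ball x r ⊆ curveInterior (c ε) := by
        intro y hy
        have hyd : dist y x < r := Metric.mem_ball.1 hy
        have hfar_y : ∀ t, 2*d/3 ≤ ‖γ t - y‖ := by
          intro t
          have h2 : ‖(γ t - x) - (γ t - y)‖ = dist y x := by
            rw [Complex.dist_eq]
            congr 1
            ring
          have h3 := norm_sub_norm_le (γ t - x) (γ t - y)
          rw [h2] at h3
          have := hfar t
          have : dist y x < d/3 := hyd
          linarith [hfar t]
        have htrans : winding (fun t => γ t + (x - y)) x = winding γ y := by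
          unfold winding
          congr 1
          apply intervalIntegral.integral_congr
          intro t _
          simp only [deriv_add_const]
          congr 1
          ring
        have hlip' : LipschitzWith K₀ (fun t => γ t + (x - y)) := by
          apply LipschitzWith.of_dist_le_mul
          intro a b
          have he : dist (γ a + (x - y)) (γ b + (x - y)) = dist (γ a) (γ b) := by
            rw [Complex.dist_eq, Complex.dist_eq]; congr 1; ring
          rw [he]
          exact hlip₀.dist_le_mul a b
        have hper' : Function.Periodic (fun t => γ t + (x - y)) 1 := fun t => by
          simp [hper₀ t]
        have hclose' : ∀ t, ‖(γ t + (x - y)) - γ t‖ ≤ d/3 := by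
          intro t
          have h4 : ‖x - y‖ = dist y x := by rw [Complex.dist_eq, norm_sub_rev]
          calc ‖(γ t + (x - y)) - γ t‖ = ‖x - y‖ := by congr 1; ring
            _ ≤ d/3 := by rw [h4]; exact hyd.le
        have h4 : winding (fun t => γ t + (x - y)) x = winding γ x :=
          winding_eq_of_close hlip₀ hlip' hper₀ hper' hdpos hfar hclose'
        have hwy : winding γ y = winding γ x := by rw [← htrans, h4]
        have hclose'' : ∀ t, ‖c ε t - γ t‖ ≤ (2*d/3)/3 := fun t => (hclose9 t).trans (by linarith)
        have h5 : winding (c ε) y = winding γ y :=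
          winding_eq_of_close hlip₀ hLlip hper₀ (hper ε hIoo) (by positivity) hfar_y hclose''
        have hynot : y ∉ Set.range (c ε) := by
          rintro ⟨t, ht⟩
          have h6 := hfar_y t
          rw [← ht] at h6
          have h7 : ‖γ t - c ε t‖ ≤ d/9 := by rw [norm_sub_rev]; exact hclose9 t
          linarith
        exact ⟨hynot, by rw [h5, hwy, ← hwx, h1]⟩
      have hmono : volume (Metric.ball x r) ≤ volume (curveInterior (c ε)) := measure_mono hsub
      rw [harea ε hIoo] at hmono
      exact lt_irrefl _ (lt_of_le_of_lt hmono hvol)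
  refine ⟨key, ?_⟩
  have hempty : curveInterior γ = ∅ := by
    ext y
    simp only [curveInterior, mem_setOf_eq, mem_empty_iff_false, iff_false, not_and]
    intro hy1 hy2
    rw [key y hy1] at hy2
    exact zero_ne_one hy2
  rw [hempty]
  exact measure_empty
end
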